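/- Fix real numbers λ > 0, T > 0 and u. Define f₁(t) = t/λ - (1 - e^{-λt})/λ² and f₂(t) = t²/λ - 2t/λ² + 2(1 - e^{-λt})/λ³. Then the function ψ(t) := (u²/(2T²))·f₂(t) - (u/(2T))·f₁(t) satisfies ψ(0) = 0 and the Barndorff-Nielsen–Shephard average-price Riccati equation ψ'(t) = (1/2)·((ut/T)² - ut/T) - λ·ψ(t) for all t ∈ ℝ. -/

import Mathlib

/-- Explicit solution of the Barndorff-Nielsen–Shephard average-price Riccati
equation: with `f₁(t) = t/λ - (1 - e^{-λt})/λ²` and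
`f₂(t) = t²/λ - 2t/λ² + 2(1 - e^{-λt})/λ³`, the function
`ψ(t) = (u²/(2T²)) f₂(t) - (u/(2T)) f₁(t)` satisfies `ψ(0) = 0` and
`ψ'(t) = (1/2)((ut/T)² - ut/T) - λ ψ(t)` for all `t`. -/
theorem bns_average_price_riccati_solution
    (lam T u : ℝ) (hlam : 0 < lam) (hT : 0 < T)
    (f₁ f₂ ψ : ℝ → ℝ)
    (hf₁ : ∀ t, f₁ t = t / lam - (1 - Real.exp (-lam * t)) / lam ^ 2)
    (hf₂ : ∀ t, f₂ t = t ^ 2 / lam - 2 * t / lam ^ 2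
      + 2 * (1 - Real.exp (-lam * t)) / lam ^ 3)
    (hψ : ∀ t, ψ t = (u ^ 2 / (2 * T ^ 2)) * f₂ t - (u / (2 * T)) * f₁ t) :
    ψ 0 = 0 ∧
    ∀ t : ℝ, HasDerivAt ψ ((1 / 2) * ((u * t / T) ^ 2 - u * t / T) - lam * ψ t) t := by
  have hlam0 : lam ≠ 0 := ne_of_gt hlam
  have hT0 : T ≠ 0 := ne_of_gt hT
  have hψ0 : ψ 0 = 0 := by simp [hψ, hf₁, hf₂]
  refine ⟨hψ0, fun t => ?_⟩
  have hψf : ψ = fun t => (u ^ 2 / (2 * T ^ 2)) *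
      (t ^ 2 / lam - 2 * t / lam ^ 2 + 2 * (1 - Real.exp (-lam * t)) / lam ^ 3)
      - (u / (2 * T)) * (t / lam - (1 - Real.exp (-lam * t)) / lam ^ 2) := by
    funext s; rw [hψ, hf₁, hf₂]
  have hE : HasDerivAt (fun s : ℝ => Real.exp (-lam * s))
      (Real.exp (-lam * t) * (-lam)) t := by
    simpa using ((hasDerivAt_id t).const_mul (-lam)).exp
  have h2 : HasDerivAt (fun s : ℝ => s ^ 2) (2 * t) t := by
    simpa using hasDerivAt_pow 2 t
  have H : HasDerivAt ψ
      ((u ^ 2 / (2 * T ^ 2)) * (2 * t / lam - 2 / lam ^ 2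
        + 2 * (0 - Real.exp (-lam * t) * (-lam)) / lam ^ 3)
      - (u / (2 * T)) * (1 / lam - (0 - Real.exp (-lam * t) * (-lam)) / lam ^ 2)) t := by
    rw [hψf]
    simpa [Pi.sub_def] using ((((h2.div_const lam).sub (((hasDerivAt_id t).const_mul 2).div_const (lam ^ 2))).add
        ((((hasDerivAt_const t 1).sub hE).const_mul 2).div_const (lam ^ 3))).const_mul
        (u ^ 2 / (2 * T ^ 2))).sub
      ((((hasDerivAt_id t).div_const lam).sub
        (((hasDerivAt_const t 1).sub hE).div_const (lam ^ 2))).const_mul (u / (2 * T)))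
  convert H using 1
  rw [hψ t, hf₁, hf₂]
  field_simp
  ring
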